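/- Let F be a filter of subsets of ℕ (closed under finite intersections and supersets, containing ℕ) and let n ≥ 1. The n-fold sumset F + F + ⋯ + F, i.e., the set of all iterated symmetric differences X₁ Δ X₂ Δ ⋯ Δ Xₙ with X₁, …, Xₙ ∈ F, equals F if n is odd and equals F^c = {Z ⊆ ℕ : ℕ \ Z ∈ F} if n is even. -/
import Mathlib


/-- `F` is a filter of subsets of `ℕ`: it contains `ℕ`, is closed under finite (binary)
intersections and under supersets. -/
def IsSetFilter (F : Set (Set ℕ)) : Prop :=
  Set.univ ∈ F ∧ (∀ X ∈ F, ∀ Y ∈ F, X ∩ Y ∈ F) ∧ (∀ X ∈ F, ∀ Y : Set ℕ, X ⊆ Y → Y ∈ F)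

/-- The `n`-fold sumset `F + F + ⋯ + F` (the set of iterated symmetric differences
`X₁ Δ X₂ Δ ⋯ Δ Xₙ` of members of `F`, i.e. pointwise mod-2 sums of characteristic
functions) equals `F` if `n` is odd, and the dual ideal `F^c = {Z | ℕ \ Z ∈ F}`
if `n` is even. -/
theorem filter_iterated_sum (F : Set (Set ℕ)) (hF : IsSetFilter F) (n : ℕ) (hn : 1 ≤ n) :
    {Z : Set ℕ | ∃ X : Fin n → Set ℕ, (∀ i, X i ∈ F) ∧
        Z = (List.ofFn X).foldr symmDiff ∅}
      = if Odd n then F else {Z : Set ℕ | Zᶜ ∈ F} := by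
  obtain ⟨huniv, hinter, hsup⟩ := hF
  induction n with
  | zero => omega
  | succ n ih =>
    rcases Nat.eq_zero_or_pos n with rfl | hn'
    · rw [if_pos (by decide : Odd (0 + 1))]
      ext Z
      simp only [Set.mem_setOf_eq, List.ofFn_succ, List.ofFn_zero, List.foldr]
      constructor
      · rintro ⟨X, hX, rfl⟩
        simpa [Set.symmDiff_def] using hX 0
      · intro hZ
        exact ⟨fun _ => Z, fun _ => hZ, by simp [Set.symmDiff_def]⟩
    · have ihn := ih hn'
      have hstep : {Z : Set ℕ | ∃ X : Fin (n + 1) → Set ℕ, (∀ i, X i ∈ F) ∧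
          Z = (List.ofFn X).foldr symmDiff ∅}
          = {Z | ∃ A ∈ F, ∃ W ∈ {Z : Set ℕ | ∃ X : Fin n → Set ℕ, (∀ i, X i ∈ F) ∧
          Z = (List.ofFn X).foldr symmDiff ∅}, Z = symmDiff A W} := by
        ext Z
        constructor
        · rintro ⟨X, hX, rfl⟩
          exact ⟨X 0, hX 0, _, ⟨fun i => X i.succ, fun i => hX i.succ, rfl⟩,
            by rw [List.ofFn_succ, List.foldr_cons]⟩
        · rintro ⟨A, hA, W, ⟨X, hX, rfl⟩, rfl⟩
          refine ⟨Fin.cons A X, ?_, ?_⟩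
          · intro i
            exact Fin.cases hA (fun j => hX j) i
          · rw [List.ofFn_succ, List.foldr_cons]
            simp [Fin.cons]
      rw [hstep, ihn]
      by_cases hodd : Odd n
      · rw [if_pos hodd, if_neg (by simp only [Nat.odd_add_one]; exact not_not_intro hodd)]
        ext Z
        constructor
        · rintro ⟨A, hA, W, hW, rfl⟩
          refine hsup _ (hinter _ hA _ hW) _ ?_
          rintro a ⟨ha1, ha2⟩
          simp only [Set.mem_compl_iff, Set.mem_symmDiff]
          tauto
        · intro hZ
          refine ⟨Set.univ, huniv, Zᶜ, hZ, ?_⟩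
          ext a; simp [Set.mem_symmDiff]
      · rw [if_neg hodd, if_pos (by simp only [Nat.odd_add_one]; exact hodd)]
        ext Z
        constructor
        · rintro ⟨A, hA, W, hW, rfl⟩
          refine hsup _ (hinter _ hA _ hW) _ ?_
          rintro a ⟨ha1, ha2⟩
          simp only [Set.mem_compl_iff] at ha2
          simp [Set.mem_symmDiff, ha1, ha2]
        · intro hZ
          exact ⟨Z, hZ, ∅, by simpa using huniv, by simp [Set.symmDiff_def]⟩
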